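/- arXiv:1502.04977 — 2 statements merged into one kernel-verified Lean document; each statement's English description precedes it below -/
import Mathlib

section
/- Let g be a standard Gaussian random variable and c > 0, τ ≥ 0. Then E[((|c·g| - τ)⁺)²] = 2(c² + τ²)·Q(τ/c) - √(2/π)·c·τ·exp(-τ²/(2c²)), where Q(x) = (1/√(2π)) ∫_x^∞ e^{-t²/2} dt. -/
open MeasureTheory Real

noncomputable def Qtail (x : ℝ) : ℝ := (1 / Real.sqrt (2 * π)) * ∫ t in Set.Ioi x, Real.exp (-t ^ 2 / 2)

open Set Filter Topology
open scoped ENNReal NNReal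

private lemma int_e : Integrable (fun x : ℝ => Real.exp (-x ^ 2 / 2)) := by
  refine (integrable_exp_neg_mul_sq (b := (1/2:ℝ)) (by norm_num)).congr
    (Eventually.of_forall fun x => ?_)
  show Real.exp (-(1/2:ℝ) * x ^ 2) = Real.exp (-x ^ 2 / 2)
  congr 1; ring

private lemma int_xe : Integrable (fun x : ℝ => x * Real.exp (-x ^ 2 / 2)) := by
  refine (integrable_mul_exp_neg_mul_sq (b := (1/2:ℝ)) (by norm_num)).congr
    (Eventually.of_forall fun x => ?_)
  show x * Real.exp (-(1/2:ℝ) * x ^ 2) = x * Real.exp (-x ^ 2 / 2)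
  congr 2; ring

private lemma int_x2e : Integrable (fun x : ℝ => x ^ 2 * Real.exp (-x ^ 2 / 2)) := by
  refine (integrable_rpow_mul_exp_neg_mul_sq (b := (1/2:ℝ)) (by norm_num)
    (s := 2) (by norm_num)).congr (Eventually.of_forall fun x => ?_)
  show x ^ (2:ℝ) * Real.exp (-(1/2:ℝ) * x ^ 2) = x ^ 2 * Real.exp (-x ^ 2 / 2)
  rw [Real.rpow_two]
  congr 2; ring

private lemma deriv_aux (x : ℝ) : HasDerivAt (fun y : ℝ => -y ^ 2 / 2) (-x) x := by
  have h := ((hasDerivAt_pow 2 x).neg).div_const 2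
  refine h.congr_deriv ?_
  push_cast
  ring

private lemma tendsto_e : Tendsto (fun x : ℝ => Real.exp (-x ^ 2 / 2)) atTop (𝓝 0) := by
  have h2 : Tendsto (fun x : ℝ => x ^ 2 / 2) atTop atTop :=
    (tendsto_pow_atTop two_ne_zero).atTop_div_const two_pos
  have := Real.tendsto_exp_neg_atTop_nhds_zero.comp h2
  refine this.congr fun x => ?_
  simp [Function.comp, neg_div]

private lemma tendsto_xe : Tendsto (fun x : ℝ => x * Real.exp (-x ^ 2 / 2)) atTop (𝓝 0) := by
  have h := (rpow_mul_exp_neg_mul_sq_isLittleO_exp_neg (b := (1/2:ℝ)) (by norm_num) 1)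
  have hhalf : Tendsto (fun x : ℝ => (1/2:ℝ) * x) atTop atTop :=
    tendsto_id.const_mul_atTop (by norm_num)
  have h0 : Tendsto (fun x : ℝ => Real.exp (-(1/2:ℝ) * x)) atTop (𝓝 (0:ℝ)) := by
    have h2 := Real.tendsto_exp_neg_atTop_nhds_zero.comp hhalf
    refine h2.congr fun x => ?_
    simp [Function.comp, neg_mul]
  have h1 := h.tendsto_zero_of_tendsto h0
  refine (h1.congr' ?_)
  filter_upwards [eventually_gt_atTop (0:ℝ)] with x hx
  show x ^ (1:ℝ) * Real.exp (-(1/2:ℝ) * x ^ 2) = x * Real.exp (-x ^ 2 / 2)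
  rw [Real.rpow_one]
  congr 2; ring

/-- `∫_{Ioi a} x e^{-x²/2} = e^{-a²/2}` -/
private lemma E1_eq (a : ℝ) :
    ∫ x in Ioi a, x * Real.exp (-x ^ 2 / 2) = Real.exp (-a ^ 2 / 2) := by
  have hderiv : ∀ x ∈ Ioi a, HasDerivAt (fun y : ℝ => -Real.exp (-y ^ 2 / 2))
      (x * Real.exp (-x ^ 2 / 2)) x := by
    intro x _
    have h := ((deriv_aux x).exp).neg
    refine h.congr_deriv ?_
    ring
  have := integral_Ioi_of_hasDerivAt_of_tendsto
    (f := fun y : ℝ => -Real.exp (-y ^ 2 / 2))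
    (f' := fun x => x * Real.exp (-x ^ 2 / 2)) (a := a) (m := 0)
    (Continuous.continuousWithinAt (by continuity)) hderiv int_xe.integrableOn
    (by simpa using tendsto_e.neg)
  simpa using this

/-- `∫_{Ioi a} (x²-1) e^{-x²/2} = a e^{-a²/2}` -/
private lemma E2_sub_E0 (a : ℝ) :
    ∫ x in Ioi a, (x ^ 2 - 1) * Real.exp (-x ^ 2 / 2) = a * Real.exp (-a ^ 2 / 2) := by
  have hderiv : ∀ x ∈ Ioi a, HasDerivAt (fun y : ℝ => -y * Real.exp (-y ^ 2 / 2))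
      ((x ^ 2 - 1) * Real.exp (-x ^ 2 / 2)) x := by
    intro x _
    have h := ((hasDerivAt_id x).neg).mul ((deriv_aux x).exp)
    refine h.congr_deriv ?_
    simp only [Pi.neg_apply, id_eq]
    ring
  have hint : IntegrableOn (fun x : ℝ => (x ^ 2 - 1) * Real.exp (-x ^ 2 / 2)) (Ioi a) := by
    have h : Integrable (fun x : ℝ => x ^ 2 * Real.exp (-x ^ 2 / 2) - Real.exp (-x ^ 2 / 2)) :=
      int_x2e.sub int_e
    exact (h.congr (Eventually.of_forall fun x => by ring)).integrableOn
  have htend : Tendsto (fun y : ℝ => -y * Real.exp (-y ^ 2 / 2)) atTop (𝓝 0) := by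
    have := tendsto_xe.neg
    simpa [neg_mul] using this
  have := integral_Ioi_of_hasDerivAt_of_tendsto
    (f := fun y : ℝ => -y * Real.exp (-y ^ 2 / 2))
    (f' := fun x => (x ^ 2 - 1) * Real.exp (-x ^ 2 / 2)) (a := a) (m := 0)
    (Continuous.continuousWithinAt (by continuity)) hderiv hint htend
  rw [this]; ring

theorem rho_formula (c τ : ℝ) (hc : 0 < c) (hτ : 0 ≤ τ) :
    (∫ g, (max (|c * g| - τ) 0) ^ 2 ∂(ProbabilityTheory.gaussianReal 0 1)) =
      2 * (c ^ 2 + τ ^ 2) * Qtail (τ / c) -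
        Real.sqrt (2 / π) * c * τ * Real.exp (-τ ^ 2 / (2 * c ^ 2)) := by
  have hπ : (0:ℝ) < Real.sqrt (2 * π) := Real.sqrt_pos.mpr (by positivity)
  set a : ℝ := τ / c with ha
  have ha0 : 0 ≤ a := div_nonneg hτ hc.le
  have hca : c * a = τ := by rw [ha]; field_simp
  set ff : ℝ → ℝ := fun u => (Real.sqrt (2 * π))⁻¹ * Real.exp (-u ^ 2 / 2) *
    (max (c * u - τ) 0) ^ 2 with hff
  -- Step 1: write the Gaussian integral as a Lebesgue integral
  have hmeas : (∫ g, (max (|c * g| - τ) 0) ^ 2 ∂(ProbabilityTheory.gaussianReal 0 1))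
      = ∫ x, ff |x| := by
    rw [ProbabilityTheory.gaussianReal_of_var_ne_zero 0 one_ne_zero]
    rw [show ProbabilityTheory.gaussianPDF 0 1
        = fun x => ((ProbabilityTheory.gaussianPDFReal 0 1 x).toNNReal : ℝ≥0∞) from rfl]
    rw [integral_withDensity_eq_integral_smul
      ((ProbabilityTheory.measurable_gaussianPDFReal 0 1).real_toNNReal) _]
    congr 1
    funext x
    rw [NNReal.smul_def, Real.coe_toNNReal _ (ProbabilityTheory.gaussianPDFReal_nonneg 0 1 x)]
    have hpdf : ProbabilityTheory.gaussianPDFReal 0 1 x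
        = (Real.sqrt (2 * π))⁻¹ * Real.exp (-x ^ 2 / 2) := by
      simp [ProbabilityTheory.gaussianPDFReal, neg_div]
    rw [hpdf, hff]
    simp only [smul_eq_mul, sq_abs, abs_mul, abs_of_pos hc]
  rw [hmeas, integral_comp_abs (f := ff)]
  -- Step 2: split `Ioi 0` as `Ioc 0 a ∪ Ioi a`
  have hzero : ∫ x in Ioc 0 a, ff x = 0 := by
    refine setIntegral_eq_zero_of_forall_eq_zero fun x hx => ?_
    have hle : c * x ≤ τ := by
      rw [← hca]
      exact mul_le_mul_of_nonneg_left hx.2 hc.le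
    simp [hff, max_eq_right (by linarith : c * x - τ ≤ 0)]
  have hIoiA : ∀ x ∈ Ioi a, ff x = (Real.sqrt (2 * π))⁻¹ *
      (c ^ 2 * (x ^ 2 * Real.exp (-x ^ 2 / 2)) - 2 * c * τ * (x * Real.exp (-x ^ 2 / 2))
        + τ ^ 2 * Real.exp (-x ^ 2 / 2)) := by
    intro x hx
    have hgt : τ ≤ c * x := by
      rw [← hca]
      exact mul_le_mul_of_nonneg_left (le_of_lt hx) hc.le
    rw [hff]
    simp only [max_eq_left (by linarith : (0:ℝ) ≤ c * x - τ)]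
    ring
  have I1 : Integrable (fun x : ℝ => c ^ 2 * (x ^ 2 * Real.exp (-x ^ 2 / 2))) :=
    int_x2e.const_mul _
  have I2 : Integrable (fun x : ℝ => 2 * c * τ * (x * Real.exp (-x ^ 2 / 2))) :=
    int_xe.const_mul _
  have I3 : Integrable (fun x : ℝ => τ ^ 2 * Real.exp (-x ^ 2 / 2)) := int_e.const_mul _
  have I12 : Integrable (fun x : ℝ => c ^ 2 * (x ^ 2 * Real.exp (-x ^ 2 / 2))
      - 2 * c * τ * (x * Real.exp (-x ^ 2 / 2))) := I1.sub I2
  have I123 : Integrable (fun x : ℝ => (Real.sqrt (2 * π))⁻¹ *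
      (c ^ 2 * (x ^ 2 * Real.exp (-x ^ 2 / 2)) - 2 * c * τ * (x * Real.exp (-x ^ 2 / 2))
        + τ ^ 2 * Real.exp (-x ^ 2 / 2))) := (I12.add I3).const_mul _
  have hint2 : IntegrableOn ff (Ioi a) := by
    refine I123.integrableOn.congr_fun ?_ measurableSet_Ioi
    intro x hx
    exact (hIoiA x hx).symm
  have hint1 : IntegrableOn ff (Ioc 0 a) := by
    refine (integrableOn_zero.congr_fun ?_ measurableSet_Ioc)
    intro x hx
    have hle : c * x ≤ τ := by
      rw [← hca]
      exact mul_le_mul_of_nonneg_left hx.2 hc.le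
    simp [hff, max_eq_right (by linarith : c * x - τ ≤ 0)]
  have hsplit : ∫ x in Ioi (0:ℝ), ff x = ∫ x in Ioi a, ff x := by
    rw [← Set.Ioc_union_Ioi_eq_Ioi ha0,
      setIntegral_union (Set.Ioc_disjoint_Ioi le_rfl) measurableSet_Ioi hint1 hint2, hzero,
      zero_add]
  rw [hsplit]
  -- Step 3: compute the integral over `Ioi a`
  set E0 : ℝ := ∫ t in Ioi a, Real.exp (-t ^ 2 / 2) with hE0
  have hE2 : ∫ x in Ioi a, x ^ 2 * Real.exp (-x ^ 2 / 2)
      = E0 + a * Real.exp (-a ^ 2 / 2) := by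
    have h := E2_sub_E0 a
    have hsub : ∫ x in Ioi a, (x ^ 2 - 1) * Real.exp (-x ^ 2 / 2)
        = (∫ x in Ioi a, x ^ 2 * Real.exp (-x ^ 2 / 2)) - E0 := by
      rw [hE0, ← integral_sub int_x2e.integrableOn int_e.integrableOn]
      refine setIntegral_congr_fun measurableSet_Ioi fun x _ => ?_
      ring
    rw [hsub] at h
    linarith
  have hval : ∫ x in Ioi a, ff x
      = (Real.sqrt (2 * π))⁻¹ * (c ^ 2 * (E0 + a * Real.exp (-a ^ 2 / 2))
        - 2 * c * τ * Real.exp (-a ^ 2 / 2) + τ ^ 2 * E0) := by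
    rw [setIntegral_congr_fun measurableSet_Ioi hIoiA, integral_const_mul,
      integral_add I12.integrableOn I3.integrableOn,
      integral_sub I1.integrableOn I2.integrableOn,
      integral_const_mul, integral_const_mul, integral_const_mul, hE2, E1_eq, ← hE0]
  rw [hval]
  -- Step 4: final algebra
  have hQ : Qtail a = (Real.sqrt (2 * π))⁻¹ * E0 := by
    rw [Qtail, one_div, hE0]
  have hexp : Real.exp (-τ ^ 2 / (2 * c ^ 2)) = Real.exp (-a ^ 2 / 2) := by
    have harg : -τ ^ 2 / (2 * c ^ 2) = -a ^ 2 / 2 := by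
      rw [ha, div_pow]
      field_simp
    rw [harg]
  have hsqrt : Real.sqrt (2 / π) = 2 * (Real.sqrt (2 * π))⁻¹ := by
    rw [show (2:ℝ) / π = 4 / (2 * π) by ring, Real.sqrt_div (by norm_num : (0:ℝ) ≤ 4),
      show Real.sqrt 4 = 2 by rw [show (4:ℝ) = 2 ^ 2 by norm_num, Real.sqrt_sq two_pos.le],
      div_eq_mul_inv]
  rw [hQ, hexp, hsqrt]
  have hc2a : c ^ 2 * a = c * τ := by
    rw [← hca]; ring
  linear_combination (2 * (Real.sqrt (2 * π))⁻¹ * Real.exp (-a ^ 2 / 2)) * hc2a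
end

section
/- The function ρ(c, τ) := 2(c² + τ²)Q(τ/c) - √(2/π)·c·τ·e^{-τ²/(2c²)}, for fixed c > 0, is nonincreasing in τ on [0, ∞), with ρ(c, 0) = c² and ρ(c, τ) → 0 as τ → ∞. -/
open Real

noncomputable def rho (c τ : ℝ) : ℝ :=
  2 * (c ^ 2 + τ ^ 2) * Qtail (τ / c) - Real.sqrt (2 / π) * c * τ * Real.exp (-τ ^ 2 / (2 * c ^ 2))

open MeasureTheory Set Filter

lemma hint : Integrable (fun t : ℝ => Real.exp (-t ^ 2 / 2)) := by
  have h := integrable_exp_neg_mul_sq (show (0:ℝ) < 1/2 by norm_num)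
  have e : ∀ t : ℝ, -(1/2:ℝ) * t ^ 2 = -t ^ 2 / 2 := fun t => by ring
  simpa only [e] using h

lemma hintm : Integrable (fun t : ℝ => t * Real.exp (-t ^ 2 / 2)) := by
  have h := integrable_mul_exp_neg_mul_sq (show (0:ℝ) < 1/2 by norm_num)
  have e : ∀ t : ℝ, -(1/2:ℝ) * t ^ 2 = -t ^ 2 / 2 := fun t => by ring
  simpa only [e] using h

lemma tend0 : Tendsto (fun t : ℝ => Real.exp (-t ^ 2 / 2)) atTop (nhds 0) := by
  have h1 : Tendsto (fun t : ℝ => t ^ 2 / 2) atTop atTop :=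
    (tendsto_pow_atTop two_ne_zero).atTop_div_const (by norm_num)
  have h2 : Tendsto (fun t : ℝ => -t ^ 2 / 2) atTop atBot := by
    simpa [neg_div, Function.comp_def] using tendsto_neg_atTop_atBot.comp h1
  simpa [Function.comp_def] using Real.tendsto_exp_atBot.comp h2

lemma sqrt2pi_pos : 0 < Real.sqrt (2 * π) := Real.sqrt_pos.mpr (by positivity)

lemma Qtail_eq (x : ℝ) : Qtail x = Qtail 0 - (1 / Real.sqrt (2 * π)) * ∫ t in (0:ℝ)..x, Real.exp (-t ^ 2 / 2) := by
  have hx : (∫ t in Ioi x, Real.exp (-t ^ 2 / 2)) = (∫ t, Real.exp (-t ^ 2 / 2)) - ∫ t in Iic x, Real.exp (-t ^ 2 / 2) := by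
    rw [← intervalIntegral.integral_Iic_add_Ioi hint.integrableOn hint.integrableOn]; ring
  have h0 : (∫ t in Ioi (0:ℝ), Real.exp (-t ^ 2 / 2)) = (∫ t, Real.exp (-t ^ 2 / 2)) - ∫ t in Iic (0:ℝ), Real.exp (-t ^ 2 / 2) := by
    rw [← intervalIntegral.integral_Iic_add_Ioi hint.integrableOn hint.integrableOn]; ring
  have hI := intervalIntegral.integral_Iic_sub_Iic (f := fun t : ℝ => Real.exp (-t ^ 2 / 2)) (μ := volume)
    (a := 0) (b := x) hint.integrableOn hint.integrableOn
  rw [Qtail, Qtail, hx, h0, ← hI]; ring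

lemma Qtail_zero : Qtail 0 = 1 / 2 := by
  have h : (∫ t in Ioi (0:ℝ), Real.exp (-t ^ 2 / 2)) = Real.sqrt (π / (1/2)) / 2 := by
    have e : ∀ t : ℝ, -(1/2:ℝ) * t ^ 2 = -t ^ 2 / 2 := fun t => by ring
    rw [← integral_gaussian_Ioi (1/2)]; simp only [e]
  have h2 : Real.sqrt (π / (1/2)) = Real.sqrt (2 * π) := by norm_num [mul_comm]
  rw [Qtail, h, h2]
  field_simp

lemma Qtail_nonneg (x : ℝ) : 0 ≤ Qtail x := by
  apply mul_nonneg (by positivity)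
  exact setIntegral_nonneg measurableSet_Ioi fun t _ => (Real.exp_pos _).le

lemma Qtail_hasDeriv (x : ℝ) :
    HasDerivAt Qtail (-((1 / Real.sqrt (2 * π)) * Real.exp (-x ^ 2 / 2))) x := by
  have hG : HasDerivAt (fun y => ∫ t in (0:ℝ)..y, Real.exp (-t ^ 2 / 2)) (Real.exp (-x ^ 2 / 2)) x := by
    apply intervalIntegral.integral_hasDerivAt_right hint.intervalIntegrable
    · exact (Continuous.stronglyMeasurable (by fun_prop)).stronglyMeasurableAtFilter
    · fun_prop
  have := ((hG.const_mul (1 / Real.sqrt (2 * π))).const_sub (Qtail 0))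
  refine this.congr_of_eventuallyEq (Eventually.of_forall fun y => ?_) |>.congr_deriv ?_
  · exact Qtail_eq y
  · ring

lemma integral_t_exp (x : ℝ) :
    (∫ t in Ioi x, t * Real.exp (-t ^ 2 / 2)) = Real.exp (-x ^ 2 / 2) := by
  have h := integral_Ioi_of_hasDerivAt_of_tendsto'
    (f := fun t : ℝ => -Real.exp (-t ^ 2 / 2)) (f' := fun t : ℝ => t * Real.exp (-t ^ 2 / 2))
    (a := x) (m := 0) ?_ hintm.integrableOn ?_
  · rw [h]; ring
  · intro t _
    have h1 : HasDerivAt (fun t : ℝ => -t ^ 2 / 2) (-t) t := by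
      have := ((hasDerivAt_pow 2 t).neg.div_const 2)
      simpa using this.congr_deriv (by push_cast; ring)
    exact (h1.exp.neg).congr_deriv (by ring)
  · simpa using tend0.neg

lemma mills (x : ℝ) (hx : 0 ≤ x) :
    x * Qtail x ≤ (1 / Real.sqrt (2 * π)) * Real.exp (-x ^ 2 / 2) := by
  have hmono : (∫ t in Ioi x, x * Real.exp (-t ^ 2 / 2)) ≤ ∫ t in Ioi x, t * Real.exp (-t ^ 2 / 2) := by
    apply setIntegral_mono_on (hint.integrableOn.const_mul x) hintm.integrableOn measurableSet_Ioi
    intro t ht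
    exact mul_le_mul_of_nonneg_right (le_of_lt ht) (Real.exp_pos _).le
  rw [MeasureTheory.integral_const_mul] at hmono
  rw [integral_t_exp] at hmono
  calc x * Qtail x = (1 / Real.sqrt (2 * π)) * (x * ∫ t in Ioi x, Real.exp (-t ^ 2 / 2)) := by
        rw [Qtail]; ring
    _ ≤ (1 / Real.sqrt (2 * π)) * Real.exp (-x ^ 2 / 2) := by
        apply mul_le_mul_of_nonneg_left hmono (by positivity)

lemma sqrt_two_div_pi : Real.sqrt (2 / π) = 2 / Real.sqrt (2 * π) := by
  have h : Real.sqrt (2 / π) * Real.sqrt (2 * π) = 2 := by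
    rw [← Real.sqrt_mul (by positivity)]
    rw [show (2 / π) * (2 * π) = 2 ^ 2 by field_simp]
    exact Real.sqrt_sq (by norm_num)
  field_simp [eq_div_iff sqrt2pi_pos.ne', h]
  exact h

lemma rho_hasDeriv (c : ℝ) (hc : 0 < c) (τ : ℝ) :
    HasDerivAt (rho c)
      (4 * (τ * Qtail (τ / c) - c * ((1 / Real.sqrt (2 * π)) * Real.exp (-τ ^ 2 / (2 * c ^ 2))))) τ := by
  have h1 : HasDerivAt (fun τ : ℝ => τ / c) (1 / c) τ := by
    simpa using (hasDerivAt_id τ).div_const c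
  have hQ := (Qtail_hasDeriv (τ / c)).comp τ h1
  have hA : HasDerivAt (fun τ : ℝ => 2 * (c ^ 2 + τ ^ 2)) (2 * (2 * τ)) τ := by
    have := ((hasDerivAt_pow 2 τ).const_add (c ^ 2)).const_mul (2:ℝ)
    exact this.congr_deriv (by push_cast; ring)
  have hB := hA.mul hQ
  have h2 : HasDerivAt (fun τ : ℝ => -τ ^ 2 / (2 * c ^ 2)) (-(2 * τ) / (2 * c ^ 2)) τ := by
    have := ((hasDerivAt_pow 2 τ).neg.div_const (2 * c ^ 2))
    exact this.congr_deriv (by push_cast; ring)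
  have hE := h2.exp
  have hC : HasDerivAt (fun τ : ℝ => Real.sqrt (2 / π) * c * τ) (Real.sqrt (2 / π) * c) τ := by
    simpa using (hasDerivAt_id τ).const_mul (Real.sqrt (2 / π) * c)
  have hD := hC.mul hE
  have htot := hB.sub hD
  have hexp : Real.exp (-(τ / c) ^ 2 / 2) = Real.exp (-τ ^ 2 / (2 * c ^ 2)) := by
    congr 1; rw [div_pow]; ring
  unfold rho
  refine htot.congr_deriv ?_
  rw [Function.comp_def, hexp, sqrt_two_div_pi]
  field_simp
  ring

lemma key (c : ℝ) (hc : 0 < c) (τ : ℝ) (hτ : 0 ≤ τ) :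
    τ * Qtail (τ / c) ≤ c * ((1 / Real.sqrt (2 * π)) * Real.exp (-τ ^ 2 / (2 * c ^ 2))) := by
  have h := mills (τ / c) (by positivity)
  have hexp : Real.exp (-(τ / c) ^ 2 / 2) = Real.exp (-τ ^ 2 / (2 * c ^ 2)) := by
    congr 1; rw [div_pow]; ring
  rw [hexp] at h
  calc τ * Qtail (τ / c) = c * ((τ / c) * Qtail (τ / c)) := by field_simp
    _ ≤ c * ((1 / Real.sqrt (2 * π)) * Real.exp (-τ ^ 2 / (2 * c ^ 2))) :=
        mul_le_mul_of_nonneg_left h hc.le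

lemma tendstoT (c : ℝ) (hc : 0 < c) :
    Tendsto (fun τ : ℝ => τ * Real.exp (-τ ^ 2 / (2 * c ^ 2))) atTop (nhds 0) := by
  have hb : 0 < 1 / (2 * c ^ 2) := by positivity
  have hO := rpow_mul_exp_neg_mul_sq_isLittleO_exp_neg hb 1
  have hO' : (fun τ : ℝ => τ * Real.exp (-τ ^ 2 / (2 * c ^ 2))) =o[atTop]
      fun x : ℝ => Real.exp (-(1/2) * x) := by
    have e : ∀ x : ℝ, x ^ (1:ℝ) * Real.exp (-(1 / (2 * c ^ 2)) * x ^ 2)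
        = x * Real.exp (-x ^ 2 / (2 * c ^ 2)) := by
      intro x; rw [Real.rpow_one]; congr 2; ring
    simpa only [e] using hO
  have hexp0 : Tendsto (fun x : ℝ => Real.exp (-(1/2) * x)) atTop (nhds 0) := by
    have h1 : Tendsto (fun x : ℝ => (1/2 : ℝ) * x) atTop atTop :=
      tendsto_id.const_mul_atTop (by norm_num)
    simpa [Function.comp_def, neg_mul] using tendsto_exp_neg_atTop_nhds_zero.comp h1
  exact hO'.isBigO.trans_tendsto hexp0

theorem rho_antitone_and_limits (c : ℝ) (hc : 0 < c) :
    AntitoneOn (rho c) (Set.Ici 0) ∧ rho c 0 = c ^ 2 ∧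
      Filter.Tendsto (rho c) Filter.atTop (nhds 0) := by
  refine ⟨?_, ?_, ?_⟩
  · apply antitoneOn_of_deriv_nonpos (convex_Ici 0)
    · exact fun τ _ => (rho_hasDeriv c hc τ).differentiableAt.continuousAt.continuousWithinAt
    · exact fun τ _ => (rho_hasDeriv c hc τ).differentiableAt.differentiableWithinAt
    · intro τ hτ
      rw [interior_Ici] at hτ
      rw [(rho_hasDeriv c hc τ).deriv]
      have h := key c hc τ (le_of_lt hτ)
      linarith
  · norm_num [rho, Qtail_zero]; ring
  · have hT := tendstoT c hc
    apply tendsto_of_tendsto_of_tendsto_of_le_of_le'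
      (g := fun τ => (-(Real.sqrt (2 / π) * c)) * (τ * Real.exp (-τ ^ 2 / (2 * c ^ 2))))
      (h := fun τ => (4 * c * (1 / Real.sqrt (2 * π))) * (τ * Real.exp (-τ ^ 2 / (2 * c ^ 2))))
    · simpa using hT.const_mul (-(Real.sqrt (2 / π) * c))
    · simpa using hT.const_mul (4 * c * (1 / Real.sqrt (2 * π)))
    · filter_upwards [eventually_ge_atTop (0:ℝ)] with τ hτ
      have h1 : 0 ≤ 2 * (c ^ 2 + τ ^ 2) * Qtail (τ / c) :=
        mul_nonneg (by positivity) (Qtail_nonneg _)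
      simp only [rho]
      nlinarith
    · filter_upwards [eventually_ge_atTop c] with τ hτ
      have hτ0 : (0:ℝ) ≤ τ := le_trans hc.le hτ
      have hk := key c hc τ hτ0
      have hQn := Qtail_nonneg (τ / c)
      have hsq : c ^ 2 ≤ τ ^ 2 := by nlinarith
      have hsnd : 0 ≤ Real.sqrt (2 / π) * c * τ * Real.exp (-τ ^ 2 / (2 * c ^ 2)) := by positivity
      simp only [rho]
      nlinarith [mul_nonneg (sub_nonneg.mpr hsq) hQn,
        mul_nonneg hτ0 (sub_nonneg.mpr hk)]
end
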